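/- Let K be a compact metric space with an action of a finite group H by homeomorphisms, and suppose K is separable. Then the topological dimension of the orbit space H\K is at most the topological dimension of K. -/

import Mathlib

/-- `DimLE X n`: every open cover of `X` has an open refinement covering `X`
in which no `n+2` distinct sets have a common point (covering dimension ≤ n). -/
def DimLE (X : Type*) [TopologicalSpace X] (n : ℕ) : Prop :=
  ∀ U : Set (Set X), (∀ u ∈ U, IsOpen u) → ⋃₀ U = Set.univ →
    ∃ V : Set (Set X), (∀ v ∈ V, IsOpen v) ∧ ⋃₀ V = Set.univ ∧
      (∀ v ∈ V, ∃ u ∈ U, v ⊆ u) ∧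
      ∀ s : Finset (Set X), ↑s ⊆ V → (⋂₀ (s : Set (Set X))).Nonempty → s.card ≤ n + 1

/-- Lebesgue covering dimension, as an element of `ℕ∞` (⊤ if no bound exists). -/
noncomputable def covDim (X : Type*) [TopologicalSpace X] : ℕ∞ :=
  sInf {n : ℕ∞ | ∃ d : ℕ, n = (d : ℕ∞) ∧ DimLE X d}

open Set

/-- transfer of the order condition along a set-map -/
lemma card_le_of_cover_map {α β : Type*} {n : ℕ} {V : Set (Set α)}
    (hV : ∀ s : Finset (Set α), ↑s ⊆ V → (⋂₀ (s : Set (Set α))).Nonempty → s.card ≤ n + 1)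
    (W : Set (Set β)) (F : Set β → Set α) (pt : β → α)
    (hFV : ∀ w ∈ W, F w ∈ V)
    (hFinj : Set.InjOn F W)
    (hFpt : ∀ w ∈ W, ∀ y ∈ w, pt y ∈ F w) :
    ∀ s : Finset (Set β), ↑s ⊆ W → (⋂₀ (s : Set (Set β))).Nonempty → s.card ≤ n + 1 := by
  classical
  rintro s hs ⟨y, hy⟩
  have hcard : (s.image F).card = s.card :=
    Finset.card_image_of_injOn (hFinj.mono hs)
  have h2 : (⋂₀ ((s.image F) : Set (Set α))).Nonempty := by
    refine ⟨pt y, ?_⟩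
    rintro v hv
    simp only [Finset.coe_image, mem_image, Finset.mem_coe] at hv
    obtain ⟨w, hw, rfl⟩ := hv
    exact hFpt w (hs hw) y (hy w hw)
  have h3 : ((s.image F : Finset (Set α)) : Set (Set α)) ⊆ V := by
    intro v hv
    simp only [Finset.coe_image, mem_image, Finset.mem_coe] at hv
    obtain ⟨w, hw, rfl⟩ := hv
    exact hFV w (hs hw)
  have := hV (s.image F) h3 h2
  omega

lemma dimLE_of_homeomorph {X Y : Type*} [TopologicalSpace X] [TopologicalSpace Y]
    (e : X ≃ₜ Y) {n : ℕ} (h : DimLE X n) : DimLE Y n := by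
  classical
  intro U hUo hUc
  obtain ⟨V, hVo, hVc, hVr, hVord⟩ := h ((fun u => e ⁻¹' u) '' U)
    (by rintro _ ⟨u, hu, rfl⟩; exact (hUo u hu).preimage e.continuous)
    (by
      apply eq_univ_of_forall
      intro x
      have : e x ∈ ⋃₀ U := hUc ▸ mem_univ _
      obtain ⟨u, hu, hx⟩ := this
      exact ⟨e ⁻¹' u, ⟨u, hu, rfl⟩, hx⟩)
  refine ⟨(fun v => e.symm ⁻¹' v) '' V, ?_, ?_, ?_, ?_⟩
  · rintro _ ⟨v, hv, rfl⟩; exact (hVo v hv).preimage e.symm.continuous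
  · apply eq_univ_of_forall; intro y
    have : e.symm y ∈ ⋃₀ V := hVc ▸ mem_univ _
    obtain ⟨v, hv, hy⟩ := this
    exact ⟨e.symm ⁻¹' v, ⟨v, hv, rfl⟩, hy⟩
  · rintro _ ⟨v, hv, rfl⟩
    obtain ⟨_, ⟨u, hu, rfl⟩, hsub⟩ := hVr v hv
    refine ⟨u, hu, fun y hy => ?_⟩
    have : e.symm y ∈ e ⁻¹' u := hsub hy
    simpa using this
  · -- order
    have hchoice : ∀ w ∈ (fun v => e.symm ⁻¹' v) '' V, ∃ v ∈ V, e.symm ⁻¹' v = w := by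
      rintro _ ⟨v, hv, rfl⟩; exact ⟨v, hv, rfl⟩
    choose Fv hFv1 hFv2 using hchoice
    -- make total function
    refine card_le_of_cover_map hVord _
      (fun w => if hw : w ∈ (fun v => e.symm ⁻¹' v) '' V then Fv w hw else ∅) e.symm ?_ ?_ ?_
    · intro w hw; rw [dif_pos hw]; exact hFv1 w hw
    · intro w hw w' hw' hEq
      dsimp only at hEq
      rw [dif_pos hw, dif_pos hw'] at hEq
      rw [← hFv2 w hw, ← hFv2 w' hw', hEq]
    · intro w hw y hy
      rw [dif_pos hw]
      have : y ∈ e.symm ⁻¹' (Fv w hw) := by rw [hFv2 w hw]; exact hy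
      exact this

lemma dimLE_empty_or {X : Type*} [TopologicalSpace X] (hX : IsEmpty X) (n : ℕ) : DimLE X n := by
  intro U hUo hUc
  refine ⟨∅, by simp, ?_, by simp, ?_⟩
  · apply eq_univ_of_forall; intro x; exact absurd trivial (hX.elim x)
  · intro s hs hne
    have : s = ∅ := by
      apply Finset.eq_empty_of_forall_notMem
      intro v hv; exact (hs hv).elim
    simp [this]

lemma dimLE_closed_subtype {X : Type*} [TopologicalSpace X] {A : Set X} (hA : IsClosed A)
    {n : ℕ} (h : DimLE X n) : DimLE A n := by
  classical
  by_cases hAe : IsEmpty A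
  · exact dimLE_empty_or hAe n
  intro U hUo hUc
  -- extend each open of A to an open of X
  have hext : ∀ u ∈ U, ∃ E : Set X, IsOpen E ∧ (Subtype.val : A → X) ⁻¹' E = u := by
    intro u hu
    exact isOpen_induced_iff.1 (hUo u hu)
  choose! E hEo hEu using hext
  obtain ⟨a0⟩ := not_isEmpty_iff.1 hAe
  obtain ⟨u0, hu0, _⟩ : ∃ u ∈ U, (a0 : A) ∈ u := by
    have : (a0 : A) ∈ ⋃₀ U := hUc ▸ mem_univ _
    obtain ⟨u, hu, h⟩ := this; exact ⟨u, hu, h⟩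
  set UU : Set (Set X) := (fun u => E u) '' U ∪ {Aᶜ} with hUU
  obtain ⟨V, hVo, hVc, hVr, hVord⟩ := h UU
    (by
      rintro v (⟨u, hu, rfl⟩ | rfl)
      · exact hEo u hu
      · exact hA.isOpen_compl)
    (by
      apply eq_univ_of_forall
      intro x
      by_cases hx : x ∈ A
      · have : (⟨x, hx⟩ : A) ∈ ⋃₀ U := hUc ▸ mem_univ _
        obtain ⟨u, hu, hxu⟩ := this
        refine ⟨E u, Or.inl ⟨u, hu, rfl⟩, ?_⟩
        rw [← hEu u hu] at hxu; exact hxu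
      · exact ⟨Aᶜ, Or.inr rfl, hx⟩)
  refine ⟨(fun v => (Subtype.val : A → X) ⁻¹' v) '' V, ?_, ?_, ?_, ?_⟩
  · rintro _ ⟨v, hv, rfl⟩; exact (hVo v hv).preimage continuous_subtype_val
  · apply eq_univ_of_forall
    intro a
    have : (a : X) ∈ ⋃₀ V := hVc ▸ mem_univ _
    obtain ⟨v, hv, hav⟩ := this
    exact ⟨_, ⟨v, hv, rfl⟩, hav⟩
  · rintro _ ⟨v, hv, rfl⟩
    obtain ⟨w, hw, hsub⟩ := hVr v hv
    rcases hw with ⟨u, hu, rfl⟩ | rfl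
    · refine ⟨u, hu, ?_⟩
      intro a ha
      rw [← hEu u hu]
      exact hsub ha
    · refine ⟨u0, hu0, ?_⟩
      intro a ha
      exact absurd a.2 (hsub ha)
  · -- order
    have hchoice : ∀ w ∈ (fun v => (Subtype.val : A → X) ⁻¹' v) '' V,
        ∃ v ∈ V, (Subtype.val : A → X) ⁻¹' v = w := by
      rintro _ ⟨v, hv, rfl⟩; exact ⟨v, hv, rfl⟩
    choose Fv hFv1 hFv2 using hchoice
    refine card_le_of_cover_map hVord _
      (fun w => if hw : w ∈ (fun v => (Subtype.val : A → X) ⁻¹' v) '' V then Fv w hw else ∅)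
      (Subtype.val) ?_ ?_ ?_
    · intro w hw; rw [dif_pos hw]; exact hFv1 w hw
    · intro w hw w' hw' hEq
      dsimp only at hEq
      rw [dif_pos hw, dif_pos hw'] at hEq
      rw [← hFv2 w hw, ← hFv2 w' hw', hEq]
    · intro w hw y hy
      rw [dif_pos hw]
      have : y ∈ (Subtype.val : A → X) ⁻¹' (Fv w hw) := by rw [hFv2 w hw]; exact hy
      exact this

/-- L1 : indexed shrinking with order bound, from `DimLE`. -/
lemma DimLE.exists_shrink {Z : Type*} [TopologicalSpace Z] {n : ℕ} (h : DimLE Z n)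
    {m : ℕ} (U : Fin m → Set Z) (hUo : ∀ i, IsOpen (U i)) (hUc : ⋃ i, U i = univ) :
    ∃ W : Fin m → Set Z, (∀ i, IsOpen (W i)) ∧ (⋃ i, W i = univ) ∧ (∀ i, W i ⊆ U i) ∧
      ∀ z : Z, ∀ s : Finset (Fin m), (∀ i ∈ s, z ∈ W i) → s.card ≤ n + 1 := by
  classical
  by_cases hm : m = 0
  · subst hm
    refine ⟨U, hUo, hUc, fun i => subset_rfl, ?_⟩
    intro z s hs
    have : s = ∅ := Finset.eq_empty_of_forall_notMem (fun i _ => (Fin.elim0 i))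
    simp [this]
  haveI : Nonempty (Fin m) := ⟨⟨0, Nat.pos_of_ne_zero hm⟩⟩
  obtain ⟨V, hVo, hVc, hVr, hVord⟩ := h (range U)
    (by rintro _ ⟨i, rfl⟩; exact hUo i)
    (by rw [sUnion_range]; exact hUc)
  have hφ : ∀ v ∈ V, ∃ i : Fin m, v ⊆ U i := by
    intro v hv
    obtain ⟨_, ⟨i, rfl⟩, hsub⟩ := hVr v hv
    exact ⟨i, hsub⟩
  choose! φ hφsub using hφ
  refine ⟨fun i => ⋃₀ {v ∈ V | φ v = i}, ?_, ?_, ?_, ?_⟩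
  · intro i; exact isOpen_sUnion (fun v hv => hVo v hv.1)
  · apply eq_univ_of_forall
    intro z
    have : z ∈ ⋃₀ V := hVc ▸ mem_univ _
    obtain ⟨v, hv, hz⟩ := this
    exact mem_iUnion.2 ⟨φ v, v, ⟨hv, rfl⟩, hz⟩
  · intro i z hz
    obtain ⟨v, ⟨hv, rfl⟩, hzv⟩ := hz
    exact hφsub v hv hzv
  · intro z s hs
    -- choose for each i in s a member v_i
    have hvi : ∀ i ∈ s, ∃ v, v ∈ V ∧ φ v = i ∧ z ∈ v := by
      intro i hi
      obtain ⟨v, ⟨hv, hφv⟩, hzv⟩ := hs i hi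
      exact ⟨v, hv, hφv, hzv⟩
    choose! vf hv1 hv2 hv3 using hvi
    have hinj : Set.InjOn vf ↑s := by
      intro i hi j hj hEq
      have h1 := hv2 i hi
      rw [hEq, hv2 j hj] at h1
      exact h1.symm
    have hcard : (s.image vf).card = s.card := Finset.card_image_of_injOn hinj
    rw [← hcard]
    apply hVord
    · intro v hv
      simp only [Finset.coe_image, mem_image, Finset.mem_coe] at hv
      obtain ⟨i, hi, rfl⟩ := hv
      exact hv1 i hi
    · refine ⟨z, ?_⟩
      intro v hv
      simp only [Finset.coe_image, mem_image, Finset.mem_coe] at hv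
      obtain ⟨i, hi, rfl⟩ := hv
      exact hv3 i hi

lemma dimLE_empty {X : Type*} [TopologicalSpace X] (hX : IsEmpty X) (n : ℕ) : DimLE X n := by
  intro U hUo hUc
  refine ⟨∅, by simp, ?_, by simp, ?_⟩
  · apply eq_univ_of_forall; intro x; exact absurd trivial (hX.elim x)
  · intro s hs hne
    have : s = ∅ := Finset.eq_empty_of_forall_notMem (fun v hv => (hs hv).elim)
    simp [this]

/-- L2 : converse, for compact spaces. -/
lemma dimLE_of_forall_shrink {Z : Type*} [TopologicalSpace Z] [CompactSpace Z] {n : ℕ}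
    (h : ∀ (m : ℕ) (U : Fin m → Set Z), (∀ i, IsOpen (U i)) → (⋃ i, U i = univ) →
      ∃ W : Fin m → Set Z, (∀ i, IsOpen (W i)) ∧ (⋃ i, W i = univ) ∧ (∀ i, W i ⊆ U i) ∧
        ∀ z : Z, ∀ s : Finset (Fin m), (∀ i ∈ s, z ∈ W i) → s.card ≤ n + 1) :
    DimLE Z n := by
  classical
  intro U hUo hUc
  obtain ⟨t, ht⟩ := isCompact_univ.elim_finite_subcover (fun u : U => (u : Set Z))
    (fun u => hUo u u.2) (by rw [← sUnion_eq_iUnion, hUc])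
  set m := t.card with hm
  set idx : Fin m → Set Z := fun j => ((t.equivFin.symm j : ↥t) : ↥U) with hidx
  have hio : ∀ j, IsOpen (idx j) := fun j => hUo _ (((t.equivFin.symm j : ↥t) : ↥U)).2
  have hic : ⋃ j, idx j = univ := by
    apply eq_univ_of_forall
    intro z
    have hz := ht (mem_univ z)
    obtain ⟨u, hu, hzu⟩ := mem_iUnion₂.1 hz
    refine mem_iUnion.2 ⟨t.equivFin ⟨u, hu⟩, ?_⟩
    simp only [hidx, Equiv.symm_apply_apply]
    exact hzu
  by_cases hm0 : m = 0
  · have hZ : IsEmpty Z := by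
      refine ⟨fun z => ?_⟩
      have h0 : t = ∅ := Finset.card_eq_zero.1 (by omega)
      have := ht (mem_univ z)
      rw [h0] at this
      simpa using this
    obtain ⟨VV, h1, h2, h3, h4⟩ := dimLE_empty hZ n U hUo hUc
    exact ⟨VV, h1, h2, h3, h4⟩
  haveI : Nonempty (Fin m) := ⟨⟨0, Nat.pos_of_ne_zero hm0⟩⟩
  obtain ⟨W, hWo, hWc, hWs, hWord⟩ := h m idx hio hic
  refine ⟨range W, ?_, ?_, ?_, ?_⟩
  · rintro _ ⟨j, rfl⟩; exact hWo j
  · rw [sUnion_range]; exact hWc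
  · rintro _ ⟨j, rfl⟩
    exact ⟨((t.equivFin.symm j : ↥t) : ↥U), (((t.equivFin.symm j : ↥t) : ↥U)).2, hWs j⟩
  · intro s hs hne
    obtain ⟨z, hz⟩ := hne
    have hψ : ∀ w ∈ s, ∃ j, W j = w := fun w hw => hs hw
    choose! ψ hψ using hψ
    have hinj : Set.InjOn ψ ↑s := by
      intro w hw w' hw' hEq
      rw [← hψ w hw, ← hψ w' hw', hEq]
    rw [← Finset.card_image_of_injOn hinj]
    apply hWord z
    intro j hj
    simp only [Finset.mem_image] at hj
    obtain ⟨w, hw, rfl⟩ := hj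
    rw [hψ w hw]
    exact hz w hw

/-- L4 : order reduction on a closed subset of low dimension. -/
lemma shrink_on_closed {Z : Type*} [TopologicalSpace Z] {A : Set Z} (hA : IsClosed A) {n : ℕ}
    (hdim : DimLE A n) {m : ℕ} (V : Fin m → Set Z) (hVo : ∀ i, IsOpen (V i))
    (hVc : ⋃ i, V i = univ) :
    ∃ V' : Fin m → Set Z, (∀ i, IsOpen (V' i)) ∧ (⋃ i, V' i = univ) ∧ (∀ i, V' i ⊆ V i) ∧
      ∀ z ∈ A, ∀ s : Finset (Fin m), (∀ i ∈ s, z ∈ V' i) → s.card ≤ n + 1 := by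
  classical
  set T : Fin m → Set A := fun i => (Subtype.val : A → Z) ⁻¹' (V i) with hT
  have hTo : ∀ i, IsOpen (T i) := fun i => (hVo i).preimage continuous_subtype_val
  have hTc : ⋃ i, T i = univ := by
    apply eq_univ_of_forall
    intro a
    have : (a : Z) ∈ ⋃ i, V i := hVc ▸ mem_univ _
    obtain ⟨i, hi⟩ := mem_iUnion.1 this
    exact mem_iUnion.2 ⟨i, hi⟩
  obtain ⟨W, hWo, hWc, hWs, hWord⟩ := hdim.exists_shrink T hTo hTc
  have hG : ∀ i, ∃ G : Set Z, IsOpen G ∧ (Subtype.val : A → Z) ⁻¹' G = W i :=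
    fun i => isOpen_induced_iff.1 (hWo i)
  choose G hGo hGW using hG
  refine ⟨fun i => (G i ∩ V i) ∪ (V i \ A), ?_, ?_, ?_, ?_⟩
  · intro i
    exact ((hGo i).inter (hVo i)).union ((hVo i).sdiff hA)
  · apply eq_univ_of_forall
    intro z
    by_cases hz : z ∈ A
    · have : (⟨z, hz⟩ : A) ∈ ⋃ i, W i := hWc ▸ mem_univ _
      obtain ⟨i, hi⟩ := mem_iUnion.1 this
      have hzV : z ∈ V i := hWs i hi
      have hzG : z ∈ G i := by rw [← hGW i] at hi; exact hi
      exact mem_iUnion.2 ⟨i, Or.inl ⟨hzG, hzV⟩⟩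
    · have : z ∈ ⋃ i, V i := hVc ▸ mem_univ _
      obtain ⟨i, hi⟩ := mem_iUnion.1 this
      exact mem_iUnion.2 ⟨i, Or.inr ⟨hi, hz⟩⟩
  · intro i z hz
    rcases hz with ⟨_, h⟩ | ⟨h, _⟩ <;> exact h
  · intro z hz s hs
    apply hWord ⟨z, hz⟩
    intro i hi
    rcases hs i hi with ⟨hG', _⟩ | ⟨_, hA'⟩
    · rw [← hGW i]; exact hG'
    · exact absurd hz hA'

/-- L7 : countable closed sum theorem for compact Hausdorff spaces. -/
lemma dimLE_of_countable_closed_cover {Z : Type*} [TopologicalSpace Z] [CompactSpace Z]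
    [T2Space Z] {n : ℕ} (A : ℕ → Set Z) (hAc : ∀ k, IsClosed (A k)) (hAu : ⋃ k, A k = univ)
    (hdim : ∀ k, DimLE (A k) n) : DimLE Z n := by
  classical
  apply dimLE_of_forall_shrink
  intro m U hUo hUc
  -- the recursive improvement step
  set T := {W : Fin m → Set Z // (∀ i, IsOpen (W i)) ∧ ⋃ i, W i = univ} with hTdef
  have step : ∀ (k : ℕ) (V : T), ∃ W : T, (∀ i, closure (W.1 i) ⊆ V.1 i) ∧
      ∀ z ∈ A k, ∀ s : Finset (Fin m), (∀ i ∈ s, z ∈ W.1 i) → s.card ≤ n + 1 := by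
    rintro k ⟨V, hVo, hVc⟩
    obtain ⟨V'', hV''c, hV''o, hV''cl⟩ := exists_iUnion_eq_closure_subset hVo
      (fun z => Set.toFinite _) hVc
    obtain ⟨V', hV'o, hV'c, hV's, hV'ord⟩ := shrink_on_closed (hAc k) (hdim k) V'' hV''o hV''c
    refine ⟨⟨V', hV'o, hV'c⟩, ?_, hV'ord⟩
    intro i
    exact (closure_mono (hV's i)).trans (hV''cl i)
  choose stepF hstep1 hstep2 using step
  let seq : ℕ → T := fun k => Nat.rec ⟨U, hUo, hUc⟩ (fun k ih => stepF k ih) k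
  have seq_succ : ∀ k, seq (k + 1) = stepF k (seq k) := fun k => rfl
  have hcl : ∀ k i, closure ((seq (k + 1)).1 i) ⊆ (seq k).1 i := by
    intro k i
    rw [seq_succ k]
    exact hstep1 k (seq k) i
  have hmono : ∀ k i, (seq (k + 1)).1 i ⊆ (seq k).1 i :=
    fun k i => subset_closure.trans (hcl k i)
  have hchain : ∀ j k, j ≤ k → ∀ i, (seq k).1 i ⊆ (seq j).1 i := by
    intro j k hjk
    induction k with
    | zero => intro i; rw [Nat.le_zero.1 hjk]
    | succ k ih =>
      intro i
      rcases Nat.lt_or_ge j (k+1) with hlt | hge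
      · exact (hmono k i).trans (ih (Nat.lt_succ_iff.1 hlt) i)
      · rw [Nat.le_antisymm hjk hge]
  have hord : ∀ k z, z ∈ A k → ∀ s : Finset (Fin m), (∀ i ∈ s, z ∈ (seq (k+1)).1 i) →
      s.card ≤ n + 1 := by
    intro k z hz s hs
    rw [seq_succ k] at hs
    exact hstep2 k (seq k) z hz s hs
  -- the high-order locus
  set SS : Finset (Finset (Fin m)) := Finset.univ.filter (fun s => s.card = n + 2) with hSS
  set Hlocus : ℕ → Set Z := fun k => ⋃ s ∈ SS, ⋂ i ∈ (s : Finset (Fin m)), (seq k).1 i with hHl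
  have hHcl : ∀ k, closure (Hlocus (k+1)) ⊆ Hlocus k := by
    intro k
    rw [hHl]
    simp only
    rw [Finset.closure_biUnion]
    apply iUnion₂_mono
    intro s hsSS
    refine (closure_mono (Set.iInter₂_mono (fun i hi => subset_rfl))).trans ?_
    refine subset_trans ?_ (Set.iInter₂_mono (fun i hi => hcl k i))
    -- closure of iInter subset iInter of closures
    apply subset_iInter₂
    intro i hi
    exact closure_mono (biInter_subset_of_mem hi)
  have hHempty : (⋂ k, closure (Hlocus (k+1))) = ∅ := by
    rw [eq_empty_iff_forall_notMem]
    intro z hz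
    have hzH : ∀ k, z ∈ Hlocus k := by
      intro k
      have := mem_iInter.1 hz k
      exact hHcl k this
    have hzA : z ∈ ⋃ k, A k := hAu ▸ mem_univ z
    obtain ⟨k, hk⟩ := mem_iUnion.1 hzA
    have := hzH (k + 1)
    obtain ⟨s, hsSS, hzs⟩ := mem_iUnion₂.1 this
    have hcard : s.card = n + 2 := (Finset.mem_filter.1 hsSS).2
    have : s.card ≤ n + 1 := by
      apply hord k z hk s
      intro i hi
      exact (mem_iInter₂.1 hzs) i hi
    omega
  -- compactness: some closure (Hlocus (K+1)) is empty
  have hKex : ∃ K, Hlocus (K + 1) = ∅ := by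
    by_contra hcon
    push_neg at hcon
    have hne : ∀ k, (closure (Hlocus (k+1))).Nonempty := by
      intro k
      obtain ⟨z, hz⟩ := hcon k
      exact ⟨z, subset_closure hz⟩
    have hdec : ∀ k, closure (Hlocus (k+1+1)) ⊆ closure (Hlocus (k+1)) :=
      fun k => ((hHcl (k+1)).trans subset_closure)
    have := IsCompact.nonempty_iInter_of_sequence_nonempty_isCompact_isClosed
      (fun k => closure (Hlocus (k+1))) hdec hne
      (isClosed_closure.isCompact) (fun k => isClosed_closure)
    rw [hHempty] at this
    exact absurd this (by simp [Set.not_nonempty_empty])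
  obtain ⟨K, hK⟩ := hKex
  refine ⟨(seq (K+1)).1, (seq (K+1)).2.1, (seq (K+1)).2.2, ?_, ?_⟩
  · intro i
    exact hchain 0 (K+1) (Nat.zero_le _) i
  · intro z s hs
    by_contra hcon
    push_neg at hcon
    obtain ⟨s', hs's, hs'card⟩ := Finset.exists_subset_card_eq (by omega : n + 2 ≤ s.card)
    have hzH : z ∈ Hlocus (K+1) := by
      refine mem_iUnion₂.2 ⟨s', ?_, ?_⟩
      · rw [hSS]; exact Finset.mem_filter.2 ⟨Finset.mem_univ _, hs'card⟩
      · exact mem_iInter₂.2 (fun i hi => hs i (hs's hi))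
    rw [hK] at hzH
    exact hzH

section GroupPlumbing
variable {G X : Type*} [Group G] [Finite G] [MulAction G X]

lemma quot_eq_iff_orbit {z s : X} :
    Quotient.mk (MulAction.orbitRel G X) z = Quotient.mk (MulAction.orbitRel G X) s
      ↔ ∃ g : G, g • s = z := by
  rw [Quotient.eq, MulAction.orbitRel_apply, MulAction.mem_orbit_iff]

variable [TopologicalSpace X]

/-- saturation of a set -/
lemma saturation_eq (S : Set X) :
    (Quotient.mk (MulAction.orbitRel G X)) ⁻¹' ((Quotient.mk (MulAction.orbitRel G X)) '' S)
      = ⋃ g : G, (fun z => g • z) ⁻¹' S := by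
  ext z
  simp only [mem_preimage, mem_image, mem_iUnion]
  constructor
  · rintro ⟨s, hs, hqs⟩
    obtain ⟨g, hg⟩ := quot_eq_iff_orbit.1 hqs.symm
    refine ⟨g⁻¹, ?_⟩
    show g⁻¹ • z ∈ S
    rw [← hg, inv_smul_smul]
    exact hs
  · rintro ⟨g, hgz⟩
    exact ⟨g • z, hgz, quot_eq_iff_orbit.2 ⟨g, rfl⟩⟩

variable (hc : ∀ g : G, Continuous fun z : X => g • z)

lemma smul_image_eq_preimage (g : G) (S : Set X) :
    (fun z => g • z) '' S = (fun z => g⁻¹ • z) ⁻¹' S := by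
  ext z
  simp only [mem_image, mem_preimage]
  constructor
  · rintro ⟨u, hu, rfl⟩; simpa using hu
  · intro h; exact ⟨g⁻¹ • z, h, by simp⟩

include hc in
lemma smul_image_open {U : Set X} (hU : IsOpen U) (g : G) :
    IsOpen ((fun z => g • z) '' U) := by
  rw [smul_image_eq_preimage]; exact hU.preimage (hc g⁻¹)

include hc in
lemma smul_image_closed {C : Set X} (hC : IsClosed C) (g : G) :
    IsClosed ((fun z => g • z) '' C) := by
  rw [smul_image_eq_preimage]; exact hC.preimage (hc g⁻¹)

include hc in
lemma quot_image_open {U : Set X} (hU : IsOpen U) :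
    IsOpen ((Quotient.mk (MulAction.orbitRel G X)) '' U) := by
  have h1 : IsOpen ((Quotient.mk (MulAction.orbitRel G X)) ⁻¹'
      ((Quotient.mk (MulAction.orbitRel G X)) '' U)) := by
    rw [saturation_eq]
    exact isOpen_iUnion (fun g => hU.preimage (hc g))
  exact isQuotientMap_quotient_mk'.isOpen_preimage.1 h1

include hc in
lemma quot_image_closed {C : Set X} (hC : IsClosed C) :
    IsClosed ((Quotient.mk (MulAction.orbitRel G X)) '' C) := by
  have h1 : IsClosed ((Quotient.mk (MulAction.orbitRel G X)) ⁻¹'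
      ((Quotient.mk (MulAction.orbitRel G X)) '' C)) := by
    rw [saturation_eq]
    exact isClosed_iUnion_of_finite (fun g => hC.preimage (hc g))
  exact isQuotientMap_quotient_mk'.isClosed_preimage.1 h1

end GroupPlumbing

section T2
variable {G X : Type*} [Group G] [Finite G] [MulAction G X] [MetricSpace X]
  (hc : ∀ g : G, Continuous fun z : X => g • z)

include hc in
lemma quot_t2 : T2Space (Quotient (MulAction.orbitRel G X)) := by
  classical
  haveI := Fintype.ofFinite G
  constructor
  intro a b hab
  obtain ⟨x, rfl⟩ := Quotient.exists_rep a
  obtain ⟨y, rfl⟩ := Quotient.exists_rep b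
  -- distance between the orbits
  have hne : ∀ p : G × G, p.1 • x ≠ p.2 • y := by
    rintro ⟨g, h⟩ hEq
    apply hab
    apply (quot_eq_iff_orbit (G := G)).2
    exact ⟨g⁻¹ * h, by rw [mul_smul, ← hEq]; simp⟩
  set δ : ℝ := (Finset.univ : Finset (G × G)).inf' ⟨(1,1), Finset.mem_univ _⟩
      (fun p => dist (p.1 • x) (p.2 • y)) with hδ
  have hδpos : 0 < δ := by
    rw [hδ]; refine (Finset.lt_inf'_iff _).2 ?_
    intro p _
    exact dist_pos.2 (hne p)
  set U0 : Set X := ⋃ g : G, Metric.ball (g • x) (δ/2) with hU0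
  set V0 : Set X := ⋃ g : G, Metric.ball (g • y) (δ/2) with hV0
  have hU0V0 : U0 ∩ V0 = ∅ := by
    rw [eq_empty_iff_forall_notMem]
    rintro z ⟨hzU, hzV⟩
    obtain ⟨g, hg⟩ := mem_iUnion.1 hzU
    obtain ⟨h, hh⟩ := mem_iUnion.1 hzV
    have : dist (g • x) (h • y) < δ :=
      calc dist (g • x) (h • y) ≤ dist (g • x) z + dist z (h • y) := dist_triangle _ _ _
        _ < δ/2 + δ/2 := by
            rw [Metric.mem_ball] at hg hh
            rw [dist_comm] at hg
            linarith
        _ = δ := by ring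
    have hge : δ ≤ dist (g • x) (h • y) := Finset.inf'_le _ (Finset.mem_univ (g, h))
    linarith
  set U : Set X := ⋂ g : G, (fun z => g • z) ⁻¹' U0 with hU
  set V : Set X := ⋂ g : G, (fun z => g • z) ⁻¹' V0 with hV
  have hUopen : IsOpen U := isOpen_iInter_of_finite
    (fun g => (isOpen_iUnion (fun h => Metric.isOpen_ball)).preimage (hc g))
  have hVopen : IsOpen V := isOpen_iInter_of_finite
    (fun g => (isOpen_iUnion (fun h => Metric.isOpen_ball)).preimage (hc g))
  have hxU : x ∈ U := mem_iInter.2 (fun g => mem_iUnion.2 ⟨g, by simp [Metric.mem_ball, hδpos]⟩)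
  have hyV : y ∈ V := mem_iInter.2 (fun g => mem_iUnion.2 ⟨g, by simp [Metric.mem_ball, hδpos]⟩)
  have hUinv : ∀ g : G, ∀ z ∈ U, g • z ∈ U := by
    intro g z hz
    refine mem_iInter.2 (fun g' => ?_)
    have := mem_iInter.1 hz (g' * g)
    simpa [mul_smul] using this
  have hVinv : ∀ g : G, ∀ z ∈ V, g • z ∈ V := by
    intro g z hz
    refine mem_iInter.2 (fun g' => ?_)
    have := mem_iInter.1 hz (g' * g)
    simpa [mul_smul] using this
  refine ⟨(Quotient.mk (MulAction.orbitRel G X)) '' U,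
    (Quotient.mk (MulAction.orbitRel G X)) '' V,
    quot_image_open hc hUopen, quot_image_open hc hVopen,
    mem_image_of_mem _ hxU, mem_image_of_mem _ hyV, ?_⟩
  rw [Set.disjoint_iff_inter_eq_empty, eq_empty_iff_forall_notMem]
  rintro c ⟨⟨u, hu, hqu⟩, ⟨v, hv, hqv⟩⟩
  have : ∃ g : G, g • v = u := by
    apply (quot_eq_iff_orbit (G := G)).1
    rw [hqu, hqv]
  obtain ⟨g, hg⟩ := this
  have huV : u ∈ V := hg ▸ hVinv g v hv
  have huU0 : u ∈ U0 := by have := mem_iInter.1 hu 1; simpa using this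
  have huV0 : u ∈ V0 := by have := mem_iInter.1 huV 1; simpa using this
  rw [eq_empty_iff_forall_notMem] at hU0V0
  exact hU0V0 u ⟨huU0, huV0⟩

end T2

section Slice
variable {G X : Type*} [Group G] [Finite G] [MulAction G X] [MetricSpace X]
  (hc : ∀ g : G, Continuous fun z : X => g • z)

include hc in
lemma exists_slice {x : X} (hx : ¬ ∀ g : G, g • x = x) :
    ∃ C V : Set X, IsOpen V ∧ x ∈ V ∧ V ⊆ C ∧ IsClosed C ∧
      (∀ h ∈ MulAction.stabilizer G x, ∀ c ∈ C, h • c ∈ C) ∧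
      (∀ g : G, g ∉ MulAction.stabilizer G x → ∀ c ∈ C, g • c ∉ C) := by
  classical
  push_neg at hx
  haveI := Fintype.ofFinite G
  obtain ⟨g0, hg0⟩ := hx
  set B : Finset G := Finset.univ.filter (fun g => g • x ≠ x) with hB
  have hBne : B.Nonempty := ⟨g0, by simp [hB, hg0]⟩
  set d0 : ℝ := B.inf' hBne (fun g => dist x (g • x)) with hd0
  have hd0pos : 0 < d0 := by
    rw [hd0, Finset.lt_inf'_iff]
    intro g hg
    have hgx : g • x ≠ x := by
      rw [hB] at hg
      exact (Finset.mem_filter.1 hg).2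
    exact dist_pos.2 (Ne.symm hgx)
  set ε : ℝ := d0 / 3 with hε
  have hεpos : 0 < ε := by rw [hε]; linarith
  set V : Set X := ⋂ g : G, (fun z => g • z) ⁻¹' Metric.ball (g • x) ε with hV
  have hVopen : IsOpen V :=
    isOpen_iInter_of_finite (fun g => Metric.isOpen_ball.preimage (hc g))
  have hxV : x ∈ V := mem_iInter.2 (fun g => by
    show g • x ∈ Metric.ball (g • x) ε
    simp [Metric.mem_ball, hεpos])
  set St := MulAction.stabilizer G x with hSt
  set C : Set X := ⋃ h : St, closure ((fun z => (h : G) • z) '' V) with hC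
  -- basic: translate of V lands in a ball
  have hVin : ∀ g : G, (fun z => g • z) '' V ⊆ Metric.ball (g • x) ε := by
    rintro g _ ⟨z, hz, rfl⟩
    exact mem_iInter.1 hz g
  -- C is inside the closed ball around x
  have hCball : ∀ g : G, ∀ c ∈ C, g • c ∈ Metric.closedBall (g • x) ε := by
    intro g c hc'
    obtain ⟨h, hcl⟩ := mem_iUnion.1 hc'
    have h1 : g • c ∈ (fun z => g • z) '' closure ((fun z => (h : G) • z) '' V) :=
      mem_image_of_mem _ hcl
    have h2 : (fun z => g • z) '' closure ((fun z => (h : G) • z) '' V)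
        ⊆ closure ((fun z => g • z) '' ((fun z => (h : G) • z) '' V)) :=
      image_closure_subset_closure_image (hc g)
    have h3 : (fun z => g • z) '' ((fun z => (h : G) • z) '' V)
        = (fun z => (g * (h : G)) • z) '' V := by
      rw [← image_comp]
      apply image_congr
      intro z _
      simp [Function.comp, mul_smul]
    have h4 : closure ((fun z => (g * (h : G)) • z) '' V)
        ⊆ Metric.closedBall ((g * (h : G)) • x) ε := by
      refine closure_minimal ((hVin _).trans Metric.ball_subset_closedBall) Metric.isClosed_closedBall
    have h5 : (g * (h : G)) • x = g • x := by
      rw [mul_smul, h.2]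
    rw [h3] at h2
    rw [h5] at h4
    exact h4 (h2 h1)
  have hCx : ∀ c ∈ C, c ∈ Metric.closedBall x ε := by
    intro c hc'
    have := hCball 1 c hc'
    simpa using this
  refine ⟨C, V, hVopen, hxV, ?_, ?_, ?_, ?_⟩
  · -- V ⊆ C
    intro z hz
    refine mem_iUnion.2 ⟨⟨1, Subgroup.one_mem _⟩, ?_⟩
    apply subset_closure
    refine ⟨z, hz, ?_⟩
    simp
  · exact isClosed_iUnion_of_finite (fun h => isClosed_closure)
  · -- stabilizer invariance
    intro h0 hh0 c hc'
    obtain ⟨h, hcl⟩ := mem_iUnion.1 hc'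
    refine mem_iUnion.2 ⟨⟨h0 * (h : G), Subgroup.mul_mem _ hh0 h.2⟩, ?_⟩
    have h1 : h0 • c ∈ (fun z => h0 • z) '' closure ((fun z => (h : G) • z) '' V) :=
      mem_image_of_mem _ hcl
    have h2 := image_closure_subset_closure_image (s := (fun z => (h : G) • z) '' V) (hc h0)
    have h3 : (fun z => h0 • z) '' ((fun z => (h : G) • z) '' V)
        = (fun z => (h0 * (h : G)) • z) '' V := by
      rw [← image_comp]
      apply image_congr
      intro z _
      simp [Function.comp, mul_smul]
    rw [h3] at h2
    exact h2 h1
  · -- disjointness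
    intro g hg c hc' hgc
    have h1 : g • c ∈ Metric.closedBall (g • x) ε := hCball g c hc'
    have h2 : g • c ∈ Metric.closedBall x ε := hCx _ hgc
    have hgB : g ∈ B := by
      rw [hB, Finset.mem_filter]
      exact ⟨Finset.mem_univ _, fun hEq => hg (MulAction.mem_stabilizer_iff.2 hEq)⟩
    have hd : d0 ≤ dist x (g • x) := Finset.inf'_le _ hgB
    rw [Metric.mem_closedBall] at h1 h2
    have : dist x (g • x) ≤ 2 * ε := by
      calc dist x (g • x) ≤ dist x (g • c) + dist (g • c) (g • x) := dist_triangle _ _ _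
        _ ≤ ε + ε := by rw [dist_comm x (g • c)]; linarith
        _ = 2 * ε := by ring
    rw [hε] at this
    linarith

end Slice

section Main
universe u v

lemma main_ind (N : ℕ) : ∀ (G : Type u) (X : Type v) [Group G] [Finite G] [MetricSpace X]
    [CompactSpace X] [MulAction G X],
    (∀ g : G, Continuous fun z : X => g • z) → Nat.card G ≤ N →
    ∀ n : ℕ, DimLE X n → DimLE (Quotient (MulAction.orbitRel G X)) n := by
  induction N with
  | zero =>
    intro G X _ _ _ _ _ hc hcard n hdim
    exfalso
    have := Nat.card_pos (α := G)
    omega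
  | succ N IH =>
    intro G X instG instF instM instCo instA hc hcard n hdim
    classical
    set Q := Quotient (MulAction.orbitRel G X) with hQ
    set q : X → Q := Quotient.mk (MulAction.orbitRel G X) with hq
    haveI hT2 : T2Space Q := quot_t2 hc
    by_cases hXe : IsEmpty X
    · haveI hQe : IsEmpty Q :=
        ⟨fun d => Quotient.inductionOn d (fun x => hXe.false x)⟩
      exact dimLE_empty hQe n
    rw [not_isEmpty_iff] at hXe
    -- the fixed point set
    set F : Set X := {z | ∀ g : G, g • z = z} with hF
    have hFclosed : IsClosed F := by
      have hFi : F = ⋂ g : G, {z | g • z = z} := by ext z; simp [hF, mem_iInter]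
      rw [hFi]
      exact isClosed_iInter (fun g => isClosed_eq (hc g) continuous_id)
    -- the piece coming from F
    have hqFinj : ∀ a b : X, a ∈ F → b ∈ F → q a = q b → a = b := by
      intro a b ha hb hab
      obtain ⟨g, hg⟩ := quot_eq_iff_orbit.1 hab
      rw [hb g] at hg
      exact hg.symm
    haveI : CompactSpace ↥F := isCompact_iff_compactSpace.1 (hFclosed.isCompact)
    have hD0dim : DimLE ↥(q '' F) n := by
      set e : ↥F → ↥(q '' F) := fun a => ⟨q a.1, mem_image_of_mem _ a.2⟩ with he
      have hebij : Function.Bijective e := by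
        constructor
        · intro a b hab
          apply Subtype.ext
          exact hqFinj a.1 b.1 a.2 b.2 (congrArg Subtype.val hab)
        · rintro ⟨d, z, hz, rfl⟩
          exact ⟨⟨z, hz⟩, rfl⟩
      have hecont : Continuous e :=
        Continuous.subtype_mk (continuous_quotient_mk'.comp continuous_subtype_val) _
      have homeoF : ↥F ≃ₜ ↥(q '' F) :=
        Continuous.homeoOfEquivCompactToT2 (f := Equiv.ofBijective e hebij) hecont
      exact dimLE_of_homeomorph homeoF (dimLE_closed_subtype hFclosed hdim)
    -- slices off the fixed point set
    have hpoint : ∀ z : X, z ∉ F → ∃ (Vz : Set X) (D : Set Q),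
        IsOpen Vz ∧ z ∈ Vz ∧ IsClosed D ∧ DimLE ↥D n ∧ q '' Vz ⊆ D := by
      intro z hz
      have hz' : ¬ ∀ g : G, g • z = z := hz
      obtain ⟨C, Vz, hVo, hzV, hVC, hCc, hCinv, hCdisj⟩ := exists_slice hc hz'
      set St := MulAction.stabilizer G z with hSt
      haveI : CompactSpace ↥C := isCompact_iff_compactSpace.1 hCc.isCompact
      letI sact : SMul ↥St ↥C := ⟨fun h c => ⟨(h : G) • (c : X), hCinv h h.2 c.1 c.2⟩⟩
      letI mact : MulAction ↥St ↥C :=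
        { one_smul := fun c => Subtype.ext (one_smul G c.1)
          mul_smul := fun h1 h2 c => Subtype.ext (mul_smul (h1 : G) (h2 : G) c.1) }
      have hccont : ∀ h : ↥St, Continuous fun c : ↥C => h • c := fun h =>
        Continuous.subtype_mk ((hc (h : G)).comp continuous_subtype_val) _
      have hcard' : Nat.card ↥St ≤ N := by
        obtain ⟨g0, hg0⟩ := not_forall.1 hz'
        have h1 : Nat.card ↥St < Nat.card G :=
          Finite.card_subtype_lt (p := fun g => g ∈ St) (x := g0)
            (fun hmem => hg0 (MulAction.mem_stabilizer_iff.1 hmem))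
        omega
      have hdimC : DimLE ↥C n := dimLE_closed_subtype hCc hdim
      have hQC := IH ↥St ↥C hccont hcard' n hdimC
      set φ : Quotient (MulAction.orbitRel ↥St ↥C) → Q :=
        Quotient.lift (fun c : ↥C => q c.1) (by
          intro c c' hcc
          have hcc2 : c ∈ MulAction.orbit ↥St c' := MulAction.orbitRel_apply.1 hcc
          obtain ⟨h, hh⟩ := MulAction.mem_orbit_iff.1 hcc2
          apply quot_eq_iff_orbit.2
          exact ⟨(h : G), congrArg Subtype.val hh⟩) with hφ
      have hφmem : ∀ o, φ o ∈ q '' C := by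
        intro o
        induction o using Quotient.ind with
        | _ c => exact ⟨c.1, c.2, rfl⟩
      set ψ : Quotient (MulAction.orbitRel ↥St ↥C) → ↥(q '' C) :=
        fun o => ⟨φ o, hφmem o⟩ with hψ
      have hψbij : Function.Bijective ψ := by
        constructor
        · intro a b hab
          have hab2 : φ a = φ b := congrArg Subtype.val hab
          induction a using Quotient.ind with
          | _ c =>
            induction b using Quotient.ind with
            | _ c' =>
              have hab3 : q c.1 = q c'.1 := hab2
              obtain ⟨g, hg⟩ := quot_eq_iff_orbit.1 hab3
              by_cases hgSt : g ∈ St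
              · exact Quotient.eq.2 (MulAction.orbitRel_apply.2
                  (MulAction.mem_orbit_iff.2 ⟨⟨g, hgSt⟩, Subtype.ext hg⟩))
              · exfalso
                have hnot : g • (c'.1) ∉ C := hCdisj g hgSt c'.1 c'.2
                rw [hg] at hnot
                exact hnot c.2
        · rintro ⟨d, z0, hz0, rfl⟩
          exact ⟨Quotient.mk _ ⟨z0, hz0⟩, rfl⟩
      have hφcont : Continuous φ := by
        rw [hφ]
        apply Continuous.quotient_lift
        exact continuous_quotient_mk'.comp continuous_subtype_val
      have hψcont : Continuous ψ := Continuous.subtype_mk hφcont _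
      have homeoC : Quotient (MulAction.orbitRel ↥St ↥C) ≃ₜ ↥(q '' C) :=
        Continuous.homeoOfEquivCompactToT2 (f := Equiv.ofBijective ψ hψbij) hψcont
      refine ⟨Vz, q '' C, hVo, hzV, quot_image_closed hc hCc, ?_, image_mono hVC⟩
      exact dimLE_of_homeomorph homeoC hQC
    choose! Vf Df h1 h2 h3 h4 h5 using hpoint
    -- exhaustion of the complement of F
    set E : ℕ → Set X := fun k => {z | ∀ y ∈ F, 1/((k : ℝ)+1) ≤ dist z y} with hE
    have hEclosed : ∀ k, IsClosed (E k) := by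
      intro k
      have hEi : E k = ⋂ y ∈ F, {z | 1/((k : ℝ)+1) ≤ dist z y} := by
        ext z; simp [hE, mem_iInter₂]
      rw [hEi]
      exact isClosed_biInter (fun y hy =>
        isClosed_le continuous_const (Continuous.dist continuous_id continuous_const))
    have hEF : ∀ k, ∀ z ∈ E k, z ∉ F := by
      intro k z hzE hzF
      have h0 := hzE z hzF
      rw [dist_self] at h0
      have hpos : (0:ℝ) < 1/((k : ℝ)+1) := by positivity
      linarith
    have hEcov : ∀ k, ∃ t : Finset ↥(E k), E k ⊆ ⋃ s ∈ t, Vf (s : ↥(E k)).1 := by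
      intro k
      apply (hEclosed k).isCompact.elim_finite_subcover (fun s : ↥(E k) => Vf s.1)
      · intro s; exact h1 s.1 (hEF k s.1 s.2)
      · intro z hz
        exact mem_iUnion.2 ⟨⟨z, hz⟩, h2 z (hEF k z hz)⟩
    choose t ht using hEcov
    -- the countable closed family
    set A : ℕ → Set Q := fun m =>
      ((t m.unpair.1).toList[m.unpair.2]?).elim (q '' F) (fun s => Df (s : X)) with hA
    have hAeq : ∀ m, A m = ((t m.unpair.1).toList[m.unpair.2]?).elim (q '' F)
        (fun s => Df (s : X)) := fun m => rfl
    have hAc : ∀ m, IsClosed (A m) := by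
      intro m
      rw [hAeq m]
      cases hopt : (t m.unpair.1).toList[m.unpair.2]? with
      | none => exact quot_image_closed hc hFclosed
      | some s => exact h3 s.1 (hEF _ s.1 s.2)
    have hAdim : ∀ m, DimLE ↥(A m) n := by
      intro m
      rw [hAeq m]
      cases hopt : (t m.unpair.1).toList[m.unpair.2]? with
      | none => exact hD0dim
      | some s => exact h4 s.1 (hEF _ s.1 s.2)
    have hAval : ∀ k j : ℕ, A (Nat.pair k j) =
        ((t k).toList[j]?).elim (q '' F) (fun s => Df (s : X)) := by
      intro k j
      rw [hAeq, Nat.unpair_pair]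
    have hAu : ⋃ m, A m = univ := by
      apply eq_univ_of_forall
      intro d
      obtain ⟨z, rfl⟩ := Quotient.exists_rep d
      by_cases hzF : z ∈ F
      · refine mem_iUnion.2 ⟨Nat.pair 0 (t 0).toList.length, ?_⟩
        rw [hAval, List.getElem?_eq_none (le_refl _)]
        exact mem_image_of_mem _ hzF
      · have hk : ∃ k : ℕ, z ∈ E k := by
          by_cases hFne : F.Nonempty
          · have hzd : 0 < Metric.infDist z F := by
              rw [← hFclosed.notMem_iff_infDist_pos hFne]
              exact hzF
            obtain ⟨k, hk⟩ := exists_nat_one_div_lt hzd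
            refine ⟨k, fun y hy => ?_⟩
            calc 1/((k : ℝ)+1) ≤ Metric.infDist z F := le_of_lt hk
              _ ≤ dist z y := Metric.infDist_le_dist_of_mem hy
          · exact ⟨0, fun y hy => absurd ⟨y, hy⟩ hFne⟩
        obtain ⟨k, hk⟩ := hk
        obtain ⟨s, hs, hzV⟩ := mem_iUnion₂.1 (ht k hk)
        obtain ⟨⟨j, hj⟩, hget⟩ := List.mem_iff_get.1 (Finset.mem_toList.2 hs)
        refine mem_iUnion.2 ⟨Nat.pair k j, ?_⟩
        rw [hAval, List.getElem?_eq_getElem hj, show (t k).toList[j] = s from hget]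
        exact h5 s.1 (hEF k s.1 s.2) (mem_image_of_mem _ hzV)
    exact dimLE_of_countable_closed_cover A hAc hAu hAdim

end Main

theorem stmt4 {H K : Type*} [Group H] [Finite H] [MetricSpace K] [CompactSpace K]
    [TopologicalSpace.SeparableSpace K] [MulAction H K]
    (hcont : ∀ h : H, Continuous fun x : K => h • x) :
    covDim (Quotient (MulAction.orbitRel H K)) ≤ covDim K := by
  apply sInf_le_sInf
  rintro x ⟨d, rfl, hd⟩
  exact ⟨d, rfl, main_ind (Nat.card H) H K hcont le_rfl d hd⟩
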